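/- Let E be a finite-dimensional real inner product space, let f : E → ℝ be differentiable with gradient ∇f Lipschitz continuous on E with constant L > 0, let ψ : E → ℝ, and let λ ∈ (0, 1/L). Assume that f + ψ is bounded below on E. Define the forward–backward envelope φ_λ(x) := ⨅_{z∈E} ( f(x) + ⟨∇f(x), z − x⟩ + ψ(z) + ‖z − x‖²/(2λ) ). Then ⨅_{x∈E} φ_λ(x) = ⨅_{x∈E} ( f(x) + ψ(x) ). -/

import Mathlib

open scoped RealInnerProductSpace

lemma descent_lemma
    {E : Type*} [NormedAddCommGroup E] [InnerProductSpace ℝ E] [CompleteSpace E]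
    (f : E → ℝ) (hf : Differentiable ℝ f)
    (L : ℝ)
    (hlip : ∀ x y : E, ‖gradient f x - gradient f y‖ ≤ L * ‖x - y‖)
    (x v : E) :
    f (x + v) ≤ f x + ⟪gradient f x, v⟫ + L / 2 * ‖v‖ ^ 2 := by
  set c : ℝ := ⟪gradient f x, v⟫ with hc
  have hg : ∀ t : ℝ, HasDerivAt (fun t : ℝ => f (x + t • v))
      ⟪gradient f (x + t • v), v⟫ t := by
    intro t
    have hcurve : HasDerivAt (fun t : ℝ => x + t • v) v t := by
      simpa using ((hasDerivAt_id t).smul_const v).const_add x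
    have := (hf (x + t • v)).hasGradientAt.hasFDerivAt.comp_hasDerivAt t hcurve
    simpa [InnerProductSpace.toDual_apply_apply, Function.comp_def] using this
  set φ : ℝ → ℝ := fun t => f x + t * c + L / 2 * t ^ 2 * ‖v‖ ^ 2 - f (x + t • v) with hφ
  have hφd : ∀ t : ℝ, HasDerivAt φ
      (c + L * t * ‖v‖ ^ 2 - ⟪gradient f (x + t • v), v⟫) t := by
    intro t
    have h1 : HasDerivAt (fun t : ℝ => f x + t * c + L / 2 * t ^ 2 * ‖v‖ ^ 2)
        (c + L * t * ‖v‖ ^ 2) t := by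
      have : HasDerivAt (fun t : ℝ => f x + t * c + L / 2 * t ^ 2 * ‖v‖ ^ 2)
          (0 + 1 * c + L / 2 * (2 * t ^ 1) * ‖v‖ ^ 2) t := by
        exact ((hasDerivAt_const t (f x)).add ((hasDerivAt_id t).mul_const c)).add
          (((hasDerivAt_pow 2 t).const_mul (L / 2)).mul_const (‖v‖ ^ 2))
      convert this using 1; ring
    exact h1.sub (hg t)
  have hmono : MonotoneOn φ (Set.Icc (0 : ℝ) 1) := by
    apply monotoneOn_of_deriv_nonneg (convex_Icc 0 1)
    · exact Continuous.continuousOn (by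
        have : Differentiable ℝ φ := fun t => (hφd t).differentiableAt
        exact this.continuous)
    · intro t _
      exact (hφd t).differentiableAt.differentiableWithinAt
    · intro t ht
      rw [interior_Icc] at ht
      rw [(hφd t).deriv]
      have hinner : ⟪gradient f (x + t • v) - gradient f x, v⟫
          ≤ L * t * ‖v‖ ^ 2 := by
        calc ⟪gradient f (x + t • v) - gradient f x, v⟫
            ≤ ‖gradient f (x + t • v) - gradient f x‖ * ‖v‖ :=
              real_inner_le_norm _ _
          _ ≤ L * ‖(x + t • v) - x‖ * ‖v‖ := by
              apply mul_le_mul_of_nonneg_right (hlip _ _) (norm_nonneg _)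
          _ = L * t * ‖v‖ ^ 2 := by
              rw [add_sub_cancel_left, norm_smul, Real.norm_eq_abs,
                abs_of_nonneg ht.1.le]
              ring
      rw [inner_sub_left] at hinner
      linarith
  have h01 : φ 0 ≤ φ 1 := hmono (by norm_num) (by norm_num) zero_le_one
  simp only [hφ, zero_smul, add_zero, one_smul] at h01
  norm_num at h01
  linarith

/-- Remark 5.3: for `λ ∈ (0, 1/L)` the infimum of the forward–backward envelope
equals the infimum of `f + ψ`. -/
theorem fbe_inf_eq_inf
    {E : Type*} [NormedAddCommGroup E] [InnerProductSpace ℝ E] [FiniteDimensional ℝ E]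
    (f : E → ℝ) (hf : Differentiable ℝ f)
    (L : ℝ) (hL : 0 < L)
    (hlip : ∀ x y : E, ‖gradient f x - gradient f y‖ ≤ L * ‖x - y‖)
    (ψ : E → ℝ) (l : ℝ) (hl : l ∈ Set.Ioo 0 (1 / L))
    (hbdd : BddBelow (Set.range fun x : E => f x + ψ x)) :
    (⨅ x : E, ⨅ z : E, (f x + ⟪gradient f x, z - x⟫ + ψ z + ‖z - x‖ ^ 2 / (2 * l))) =
      ⨅ x : E, (f x + ψ x) := by
  obtain ⟨hl0, hlL⟩ := hl
  set m : ℝ := ⨅ x : E, (f x + ψ x) with hm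
  -- key inequality
  have key : ∀ x z : E,
      m ≤ f x + ⟪gradient f x, z - x⟫ + ψ z + ‖z - x‖ ^ 2 / (2 * l) := by
    intro x z
    have hdesc : f z ≤ f x + ⟪gradient f x, z - x⟫ + L / 2 * ‖z - x‖ ^ 2 := by
      have := descent_lemma f hf L hlip x (z - x)
      simpa using this
    have hquad : L / 2 * ‖z - x‖ ^ 2 ≤ ‖z - x‖ ^ 2 / (2 * l) := by
      rw [div_mul_eq_mul_div, div_le_div_iff₀ two_pos (by positivity)]
      have hLl : L * l ≤ 1 := by
        have := hlL.le
        rw [le_div_iff₀ hL] at this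
        linarith
      nlinarith [sq_nonneg ‖z - x‖]
    have hmz : m ≤ f z + ψ z := ciInf_le hbdd z
    linarith
  have hinner_bdd : ∀ x : E, BddBelow (Set.range fun z : E =>
      f x + ⟪gradient f x, z - x⟫ + ψ z + ‖z - x‖ ^ 2 / (2 * l)) := by
    intro x
    exact ⟨m, by rintro _ ⟨z, rfl⟩; exact key x z⟩
  apply le_antisymm
  · -- LHS ≤ m : use z = x
    have hbdd_outer : BddBelow (Set.range fun x : E => ⨅ z : E,
        (f x + ⟪gradient f x, z - x⟫ + ψ z + ‖z - x‖ ^ 2 / (2 * l))) := by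
      refine ⟨m, ?_⟩
      rintro _ ⟨x, rfl⟩
      exact le_ciInf (key x)
    refine ciInf_mono hbdd_outer fun x => ?_
    have := ciInf_le (hinner_bdd x) x
    simpa using this
  · exact le_ciInf fun x => le_ciInf fun z => key x z
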